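/- arXiv:1306.0062 — 5 statements merged into one kernel-verified Lean document; each statement's English description precedes it below -/
import Mathlib

section
/- Generalized Cauchy–Binet, coefficient form: Let F and G be n×m matrices over a commutative ring and let 0 ≤ k ≤ m. Then p_k(Fᵀ·G) = Σ_{(I,J)} det(F_{I,J})·det(G_{I,J}), where the sum runs over all pairs (I,J) with I a k-element subset of the row indices {1,…,n} and J a k-element subset of the column indices {1,…,m}. Equivalently, (−1)^k times the coefficient of x^{m−k} in the characteristic polynomial of the m×m matrix Fᵀ·G equals this sum of products of corresponding k×k minors of F and G. -/
open Matrix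

/-- The minor of an `n × m` matrix `F` given by a `k`-element set `I` of row indices and a
`k`-element set `J` of column indices: the determinant of the `k × k` submatrix formed by the
rows in `I` and the columns in `J`, taken in increasing order. For `k = 0` it equals `1`. -/
def Matrix.minorOn {R : Type*} [CommRing R] {n m k : ℕ} (F : Matrix (Fin n) (Fin m) R)
    (I : {s : Finset (Fin n) // s.card = k}) (J : {s : Finset (Fin m) // s.card = k}) : R :=
  (F.submatrix (I.1.orderEmbOfFin I.2) (J.1.orderEmbOfFin J.2)).det


open Polynomial Finset Equiv

section Aux

variable {R : Type*} [CommRing R]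

lemma aux_det_piecewise {m : ℕ} (S : Finset (Fin m)) (c : R) (B : Matrix (Fin m) (Fin m) R) :
    (Matrix.of (S.piecewise (fun i => c • (Pi.single i 1 : Fin m → R)) (fun i => B i))).det
      = c ^ S.card * (B.submatrix (Sᶜ.orderEmbOfFin rfl) (Sᶜ.orderEmbOfFin rfl)).det := by
  classical
  set N : Matrix (Fin m) (Fin m) R :=
    Matrix.of (S.piecewise (fun i => c • (Pi.single i 1 : Fin m → R)) (fun i => B i)) with hN
  let e : {x // x ∈ S} ⊕ {x // ¬ x ∈ S} ≃ Fin m := Equiv.sumCompl (· ∈ S)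
  have h1 : N.det = (N.submatrix e e).det := (det_submatrix_equiv_self e N).symm
  have h2 : N.submatrix e e =
      fromBlocks (c • (1 : Matrix {x // x ∈ S} {x // x ∈ S} R)) 0
        (Matrix.of fun (x : {x // ¬ x ∈ S}) (y : {x // x ∈ S}) => B x.1 y.1)
        (Matrix.of fun (x : {x // ¬ x ∈ S}) (y : {x // ¬ x ∈ S}) => B x.1 y.1) := by
    ext i j
    cases i with
    | inl s =>
      have hs : (s : Fin m) ∈ S := s.2
      cases j with
      | inl t =>
        simp only [submatrix_apply, hN, Matrix.of_apply, e, Equiv.sumCompl_apply_inl,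
          Finset.piecewise_eq_of_mem _ _ _ hs, fromBlocks_apply₁₁]
        rw [Pi.smul_apply, Pi.single_apply, Matrix.smul_apply, Matrix.one_apply]
        by_cases h : s = t
        · simp [h]
        · have : (t : Fin m) ≠ (s : Fin m) := fun hc => h (Subtype.ext hc.symm)
          simp [h, this]
      | inr t =>
        simp only [submatrix_apply, hN, Matrix.of_apply, e, Equiv.sumCompl_apply_inl,
          Equiv.sumCompl_apply_inr, Finset.piecewise_eq_of_mem _ _ _ hs, fromBlocks_apply₁₂]
        have : (t : Fin m) ≠ (s : Fin m) := fun hc => t.2 (hc ▸ hs)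
        simp [Pi.single_apply, this]
    | inr s =>
      have hs : ¬ (s : Fin m) ∈ S := s.2
      cases j with
      | inl t =>
        simp [submatrix_apply, hN, e, Finset.piecewise_eq_of_notMem _ _ _ hs]
      | inr t =>
        simp [submatrix_apply, hN, e, Finset.piecewise_eq_of_notMem _ _ _ hs]
  have h3 : (N.submatrix e e).det
      = c ^ S.card * (Matrix.of fun (x : {x // ¬ x ∈ S}) (y : {x // ¬ x ∈ S}) => B x.1 y.1).det := by
    rw [h2, det_fromBlocks_zero₁₂, det_smul, det_one, Fintype.card_coe, mul_one]
  have h4 : (Matrix.of fun (x : {x // ¬ x ∈ S}) (y : {x // ¬ x ∈ S}) => B x.1 y.1).det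
      = (B.submatrix (Sᶜ.orderEmbOfFin rfl) (Sᶜ.orderEmbOfFin rfl)).det := by
    let g : Fin (Sᶜ.card) ≃ {x // ¬ x ∈ S} :=
      (Sᶜ.orderIsoOfFin rfl).toEquiv.trans (Equiv.subtypeEquivRight fun x => Finset.mem_compl)
    rw [← det_submatrix_equiv_self g]
    congr 1
  rw [h1, h3, h4]

lemma aux_charpoly_eq_sum {m : ℕ} (M : Matrix (Fin m) (Fin m) R) :
    M.charpoly = ∑ T : Finset (Fin m),
      Polynomial.C ((-1 : R) ^ T.card *
        (M.submatrix (T.orderEmbOfFin rfl) (T.orderEmbOfFin rfl)).det) * X ^ (m - T.card) := by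
  classical
  set a : Fin m → Fin m → R[X] := fun i => (X : R[X]) • (Pi.single i 1 : Fin m → R[X]) with ha
  set b : Fin m → Fin m → R[X] := fun i => (-(M.map Polynomial.C)) i with hb
  have hM : charmatrix M = Matrix.of (a + b) := by
    ext i j
    simp only [charmatrix_apply, Matrix.of_apply, Pi.add_apply, ha, hb, Pi.smul_apply,
      Pi.single_apply, Matrix.neg_apply, Matrix.map_apply, Matrix.diagonal_apply, smul_eq_mul,
      sub_eq_add_neg]
    by_cases h : i = j <;> simp [h, eq_comm]
  have key : (Matrix.of (a + b)).det = ∑ S : Finset (Fin m), (Matrix.of (S.piecewise a b)).det :=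
    Matrix.detRowAlternating.toMultilinearMap.map_add_univ a b
  have hterm : ∀ S : Finset (Fin m), (Matrix.of (S.piecewise a b)).det =
      Polynomial.C ((-1 : R) ^ Sᶜ.card *
        (M.submatrix (Sᶜ.orderEmbOfFin rfl) (Sᶜ.orderEmbOfFin rfl)).det) * X ^ S.card := by
    intro S
    have h1 := aux_det_piecewise (R := R[X]) S (X : R[X]) (-(M.map Polynomial.C))
    rw [ha, hb] at *
    rw [h1]
    have h2 : ((-(M.map Polynomial.C)).submatrix (Sᶜ.orderEmbOfFin rfl) (Sᶜ.orderEmbOfFin rfl))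
        = -((M.submatrix (Sᶜ.orderEmbOfFin rfl) (Sᶜ.orderEmbOfFin rfl)).map Polynomial.C) := by
      ext i j; simp
    rw [h2, det_neg, ← RingHom.mapMatrix_apply, ← RingHom.map_det, Fintype.card_fin]
    rw [_root_.map_mul, map_pow, map_neg, Polynomial.C_1]
    ring
  rw [Matrix.charpoly, hM, key]
  rw [Fintype.sum_bijective (·ᶜ) (Function.Involutive.bijective compl_involutive) _ _
    (fun S => ?_)]
  rw [hterm S]
  have hc : m - Sᶜ.card = S.card := by
    rw [Finset.card_compl, Fintype.card_fin]
    exact Nat.sub_sub_self (Finset.card_le_card (Finset.subset_univ S) |>.trans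
      (by simp [Finset.card_fin]))
  rw [hc]

lemma aux_det_mul_expand {n k : ℕ} (A B : Matrix (Fin n) (Fin k) R) :
    (Aᵀ * B).det = ∑ f : Fin k → Fin n, (A.submatrix f id).det * ∏ i, B (f i) i := by
  classical
  have h1 : (Aᵀ * B).det
      = ∑ f : Fin k → Fin n, ∑ σ : Equiv.Perm (Fin k),
          ((Equiv.Perm.sign σ : ℤ) : R) * ∏ i, A (f i) (σ i) * B (f i) i := by
    simp only [det_apply', mul_apply, transpose_apply, Finset.prod_univ_sum, Finset.mul_sum,
      Fintype.piFinset_univ]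
    rw [Finset.sum_comm]
  rw [h1]
  refine Finset.sum_congr rfl fun f _ => ?_
  rw [← det_transpose (A.submatrix f id), det_apply', Finset.sum_mul]
  refine Finset.sum_congr rfl fun σ _ => ?_
  rw [Finset.prod_mul_distrib]
  simp only [transpose_apply, submatrix_apply, id]
  ring

lemma aux_cauchy_binet {n k : ℕ} (A B : Matrix (Fin n) (Fin k) R) :
    (Aᵀ * B).det = ∑ I : {s : Finset (Fin n) // s.card = k},
      (A.submatrix (I.1.orderEmbOfFin I.2) id).det *
        (B.submatrix (I.1.orderEmbOfFin I.2) id).det := by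
  classical
  rw [aux_det_mul_expand]
  set term : (Fin k → Fin n) → R := fun f => (A.submatrix f id).det * ∏ i, B (f i) i with hterm
  have hzero : ∀ f : Fin k → Fin n, ¬ Function.Injective f → term f = 0 := by
    intro f hf
    rw [Function.not_injective_iff] at hf
    obtain ⟨i, j, hij, hne⟩ := hf
    rw [hterm]
    dsimp only
    rw [Matrix.det_zero_of_row_eq hne (by ext x; simp [hij]), zero_mul]
  have hstep : (∑ f : Fin k → Fin n, term f)
      = ∑ f ∈ Finset.univ.filter (fun f => Function.Injective f), term f :=
    (Finset.sum_filter_of_ne (fun f _ h => by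
      by_contra hinj
      exact h (hzero f hinj))).symm
  have hbij : (∑ p : {s : Finset (Fin n) // s.card = k} × Equiv.Perm (Fin k),
      term ((p.1.1.orderEmbOfFin p.1.2) ∘ p.2))
      = ∑ f ∈ Finset.univ.filter (fun f => Function.Injective f), term f := by
    refine Finset.sum_bij (fun p _ => (p.1.1.orderEmbOfFin p.1.2) ∘ p.2) ?_ ?_ ?_ ?_
    · intro p _
      simp only [Finset.mem_filter, Finset.mem_univ, true_and]
      exact (p.1.1.orderEmbOfFin p.1.2).injective.comp p.2.injective
    · rintro ⟨I, π⟩ _ ⟨I', π'⟩ _ h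
      dsimp only at h
      have hIset : (I.1 : Set (Fin n)) = (I'.1 : Set (Fin n)) := by
        have h1 : Set.range ((I.1.orderEmbOfFin I.2) ∘ π) = (I.1 : Set (Fin n)) := by
          rw [Set.range_comp, π.surjective.range_eq, Set.image_univ, Finset.range_orderEmbOfFin]
        have h2 : Set.range ((I'.1.orderEmbOfFin I'.2) ∘ π') = (I'.1 : Set (Fin n)) := by
          rw [Set.range_comp, π'.surjective.range_eq, Set.image_univ, Finset.range_orderEmbOfFin]
        rw [← h1, ← h2, h]
      have hI : I = I' := Subtype.ext (Finset.coe_injective hIset)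
      subst hI
      refine Prod.ext rfl (Equiv.ext fun i => ?_)
      exact (I.1.orderEmbOfFin I.2).injective (congrFun h i)
    · intro f hf
      simp only [Finset.mem_filter, Finset.mem_univ, true_and] at hf
      set I₀ : Finset (Fin n) := Finset.image f Finset.univ with hI₀
      have hcard : I₀.card = k := by
        rw [hI₀, Finset.card_image_of_injective _ hf, Finset.card_univ, Fintype.card_fin]
      have hmem : ∀ i, f i ∈ I₀ := fun i => Finset.mem_image_of_mem f (Finset.mem_univ i)
      set π₀ : Fin k → Fin k := fun i => (I₀.orderIsoOfFin hcard).symm ⟨f i, hmem i⟩ with hπ₀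
      have hcomp : ∀ i, I₀.orderEmbOfFin hcard (π₀ i) = f i := by
        intro i
        rw [hπ₀]
        rw [← Finset.coe_orderIsoOfFin_apply, OrderIso.apply_symm_apply]
      have hπinj : Function.Injective π₀ := by
        intro i j hij
        apply hf
        rw [← hcomp i, ← hcomp j, hij]
      refine ⟨(⟨I₀, hcard⟩, Equiv.ofBijective π₀ (Finite.injective_iff_bijective.mp hπinj)),
        Finset.mem_univ _, ?_⟩
      funext i
      exact hcomp i
    · intro p _; rfl
  rw [hstep, ← hbij, Fintype.sum_prod_type]
  refine Finset.sum_congr rfl fun I _ => ?_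
  rw [det_apply' (B.submatrix (I.1.orderEmbOfFin I.2) id), Finset.mul_sum]
  refine Finset.sum_congr rfl fun π _ => ?_
  rw [hterm]
  dsimp only
  have h1 : A.submatrix ((I.1.orderEmbOfFin I.2) ∘ ⇑π) id
      = (A.submatrix (I.1.orderEmbOfFin I.2) id).submatrix π id := by
    ext i j; simp
  rw [h1, Matrix.det_permute]
  simp only [Function.comp_apply, submatrix_apply, id]
  ring

lemma aux_det_congr {m k : ℕ} (M : Matrix (Fin m) (Fin m) R) (T : Finset (Fin m))
    (hT : T.card = k) :
    (M.submatrix (T.orderEmbOfFin rfl) (T.orderEmbOfFin rfl)).det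
      = (M.submatrix (T.orderEmbOfFin hT) (T.orderEmbOfFin hT)).det := by
  subst hT; rfl


end Aux

/-- Generalized Cauchy–Binet, coefficient form: for `n × m` matrices `F, G` over a commutative
ring and `0 ≤ k ≤ m`, the coefficient `p_k = (-1)^k ⬝ [x^{m-k}] charpoly(Fᵀ G)` equals the sum
over all pairs `(I, J)` of `k`-element subsets of rows and columns of the products of the
corresponding `k × k` minors of `F` and `G`. -/
theorem generalized_cauchy_binet_coeff {R : Type*} [CommRing R] {n m : ℕ}
    (F G : Matrix (Fin n) (Fin m) R) (k : ℕ) (hk : k ≤ m) :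
    (-1 : R) ^ k * (Fᵀ * G).charpoly.coeff (m - k) =
      ∑ I : {s : Finset (Fin n) // s.card = k}, ∑ J : {s : Finset (Fin m) // s.card = k},
        F.minorOn I J * G.minorOn I J := by
  classical
  calc (-1 : R) ^ k * (Fᵀ * G).charpoly.coeff (m - k)
      = ∑ T : Finset (Fin m), (if T.card = k then
          ((Fᵀ * G).submatrix (T.orderEmbOfFin rfl) (T.orderEmbOfFin rfl)).det else 0) := by
        rw [aux_charpoly_eq_sum, Polynomial.finset_sum_coeff, Finset.mul_sum]
        refine Finset.sum_congr rfl fun T _ => ?_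
        rw [Polynomial.coeff_C_mul, Polynomial.coeff_X_pow]
        have hTm : T.card ≤ m := le_trans (Finset.card_le_univ T) (by simp)
        by_cases h : T.card = k
        · have hpow : ((-1 : R)) ^ T.card = (-1) ^ k := by rw [h]
          rw [if_pos (by rw [h]), if_pos h, hpow, mul_one, ← mul_assoc, ← mul_pow,
            neg_one_mul, neg_neg, one_pow, one_mul]
        · rw [if_neg (fun hc => h (by omega)), if_neg h, mul_zero, mul_zero]
    _ = ∑ T ∈ Finset.univ.filter (fun s : Finset (Fin m) => s.card = k),
          ((Fᵀ * G).submatrix (T.orderEmbOfFin rfl) (T.orderEmbOfFin rfl)).det := by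
        rw [Finset.sum_filter]
    _ = ∑ J : {s : Finset (Fin m) // s.card = k},
          ((Fᵀ * G).submatrix (J.1.orderEmbOfFin rfl) (J.1.orderEmbOfFin rfl)).det := by
        rw [Finset.sum_subtype (p := fun s : Finset (Fin m) => s.card = k) _ (fun x => by simp)]
    _ = ∑ J : {s : Finset (Fin m) // s.card = k}, ∑ I : {s : Finset (Fin n) // s.card = k},
          F.minorOn I J * G.minorOn I J := by
        refine Finset.sum_congr rfl fun J _ => ?_
        have h1 : (Fᵀ * G).submatrix (J.1.orderEmbOfFin J.2) (J.1.orderEmbOfFin J.2)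
            = (F.submatrix id (J.1.orderEmbOfFin J.2))ᵀ * (G.submatrix id (J.1.orderEmbOfFin J.2)) := by
          ext i j; simp [mul_apply]
        rw [aux_det_congr _ _ J.2, h1, aux_cauchy_binet]
        refine Finset.sum_congr rfl fun I _ => ?_
        simp [Matrix.minorOn]
    _ = ∑ I : {s : Finset (Fin n) // s.card = k}, ∑ J : {s : Finset (Fin m) // s.card = k},
          F.minorOn I J * G.minorOn I J := Finset.sum_comm
end

section
/- Let F and G be n×m matrices over a commutative ring. Then det(1 + Fᵀ·G) = Σ_P det(F_P)·det(G_P), where the sum runs over all patterns P = (I,J) of every size k = 0,1,…,m (I a k-subset of the rows, J a k-subset of the columns), the empty pattern contributing 1. -/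
open Matrix

section Aux
open Finset


/-- Lemma 1: sum of principal minors. -/
theorem det_one_add_eq_sum {R : Type*} [CommRing R] {m : ℕ} (A : Matrix (Fin m) (Fin m) R) :
    (1 + A).det = ∑ s : Finset (Fin m),
      (A.submatrix (Subtype.val : {x // x ∈ s} → Fin m) Subtype.val).det := by
  have h1 : (fun j => (1 + A) j) =
      (((fun j => A j) + (fun j => Pi.single j (1 : R))) : ∀ _ : Fin m, Fin m → R) := by
    funext j k
    by_cases h : j = k <;>
      simp [Matrix.one_apply, Pi.single_apply, Pi.add_apply, Matrix.add_apply, h, add_comm, eq_comm]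
  have := (Matrix.detRowAlternating : (Fin m → R) [⋀^Fin m]→ₗ[R] R).toMultilinearMap.map_add_univ
    (fun j => A j) (fun j => Pi.single j (1 : R))
  rw [show (1 + A).det =
    (Matrix.detRowAlternating : (Fin m → R) [⋀^Fin m]→ₗ[R] R).toMultilinearMap
      (fun j => (1 + A) j) from rfl, h1, this]
  refine Finset.sum_congr rfl fun s _ => ?_
  -- each term
  have key : (Finset.piecewise s (fun j => A j) (fun j => Pi.single j (1:R))) =
      fun j => Finset.piecewise s (fun j => A j) (fun j => Pi.single j (1:R)) j := rfl
  show Matrix.det (Finset.piecewise s (fun j => A j) (fun j => Pi.single j (1:R))) = _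
  set M : Matrix (Fin m) (Fin m) R :=
    Finset.piecewise s (fun j => A j) (fun j => Pi.single j (1:R)) with hM
  classical
  let e : {x // x ∈ s} ⊕ {x // ¬ x ∈ s} ≃ Fin m := Equiv.sumCompl (· ∈ s)
  have : M.det = (M.submatrix e e).det := (det_submatrix_equiv_self e M).symm
  rw [this]
  have hblock : M.submatrix e e = Matrix.fromBlocks
      (A.submatrix (Subtype.val : {x // x ∈ s} → Fin m) Subtype.val)
      (Matrix.of fun a b => A a.1 b.1) 0 1 := by
    ext i j
    rcases i with i | i <;> rcases j with j | j <;>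
      simp [M, e, Matrix.submatrix, Finset.piecewise, i.2, Matrix.one_apply, Pi.single_apply,
        Subtype.ext_iff, eq_comm]
    · exact fun h => (i.2 (h ▸ j.2)).elim
  rw [hblock, Matrix.det_fromBlocks_zero₂₁]
  simp

variable {R : Type*} [CommRing R] {n k : ℕ}

/-- The image of an injective map `Fin k → Fin n` as a `k`-element subset. -/
noncomputable def packSet (r : Fin k → Fin n) (hr : Function.Injective r) :
    {s : Finset (Fin n) // s.card = k} :=
  ⟨Finset.image r Finset.univ, by
    rw [Finset.card_image_of_injective _ hr, Finset.card_univ, Fintype.card_fin]⟩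

/-- The permutation relating an injective map to the order embedding of its image. -/
noncomputable def packPerm (r : Fin k → Fin n) (hr : Function.Injective r) :
    Equiv.Perm (Fin k) :=
  Equiv.ofBijective
    (fun j => ((packSet r hr).1.orderIsoOfFin (packSet r hr).2).symm
      ⟨r j, by simp [packSet]⟩)
    (Finite.injective_iff_bijective.mp (fun a b h => hr (by
      have := congrArg (fun x => (((packSet r hr).1.orderIsoOfFin (packSet r hr).2) x : Fin n)) h
      simpa using this)))

lemma pack_spec (r : Fin k → Fin n) (hr : Function.Injective r) (j : Fin k) :
    (packSet r hr).1.orderEmbOfFin (packSet r hr).2 (packPerm r hr j) = r j := by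
  rw [packPerm, ← Finset.coe_orderIsoOfFin_apply]
  simp

theorem cauchy_binet (P Q : Matrix (Fin n) (Fin k) R) :
    (Pᵀ * Q).det = ∑ I : {s : Finset (Fin n) // s.card = k},
      (P.submatrix (I.1.orderEmbOfFin I.2) id).det *
        (Q.submatrix (I.1.orderEmbOfFin I.2) id).det := by
  classical
  have h1 : (fun j => (Pᵀ * Q) j) =
      fun j => ∑ i : Fin n, P i j • (fun j' => Q i j') := by
    funext j j'
    simp [Matrix.mul_apply, Finset.sum_apply]
  have h2 : (Pᵀ * Q).det =
      ∑ r : Fin k → Fin n, (Matrix.detRowAlternating : (Fin k → R) [⋀^Fin k]→ₗ[R] R)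
        (fun j => P (r j) j • (fun j' => Q (r j) j')) := by
    rw [show (Pᵀ * Q).det =
      (Matrix.detRowAlternating : (Fin k → R) [⋀^Fin k]→ₗ[R] R).toMultilinearMap
        (fun j => (Pᵀ * Q) j) from rfl, h1]
    rw [(Matrix.detRowAlternating : (Fin k → R) [⋀^Fin k]→ₗ[R] R).toMultilinearMap.map_sum
      (fun j i => P i j • (fun j' => Q i j'))]
    rfl
  have h3 : ∀ r : Fin k → Fin n,
      (Matrix.detRowAlternating : (Fin k → R) [⋀^Fin k]→ₗ[R] R)
        (fun j => P (r j) j • (fun j' => Q (r j) j')) =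
      (∏ j, P (r j) j) * (Q.submatrix r id).det := by
    intro r
    have hs := (Matrix.detRowAlternating :
        (Fin k → R) [⋀^Fin k]→ₗ[R] R).toMultilinearMap.map_smul_univ
      (fun j => P (r j) j) (fun j j' => Q (r j) j')
    rw [show (Matrix.detRowAlternating : (Fin k → R) [⋀^Fin k]→ₗ[R] R)
        (fun j => P (r j) j • (fun j' => Q (r j) j')) =
      (Matrix.detRowAlternating : (Fin k → R) [⋀^Fin k]→ₗ[R] R).toMultilinearMap
        (fun j => (fun j => P (r j) j) j • (fun j j' => Q (r j) j') j) from rfl, hs]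
    simp only [smul_eq_mul]
    rfl
  rw [h2]
  simp_rw [h3]
  rw [← Finset.sum_filter_add_sum_filter_not Finset.univ (fun r => Function.Injective r)]
  have h4 : ∑ r ∈ Finset.univ.filter (fun r : Fin k → Fin n => ¬ Function.Injective r),
      (∏ j, P (r j) j) * (Q.submatrix r id).det = 0 := by
    refine Finset.sum_eq_zero fun r hr => ?_
    rw [Finset.mem_filter] at hr
    obtain ⟨a, b, hab, hne⟩ : ∃ a b, r a = r b ∧ a ≠ b := by
      simpa [Function.Injective] using hr.2
    rw [Matrix.det_zero_of_row_eq hne (by funext j'; simp [hab]), mul_zero]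
  rw [h4, add_zero]
  have h5 : ∑ r ∈ Finset.univ.filter (fun r : Fin k → Fin n => Function.Injective r),
      (∏ j, P (r j) j) * (Q.submatrix r id).det
    = ∑ p ∈ (Finset.univ : Finset {s : Finset (Fin n) // s.card = k}).sigma
        (fun _ => (Finset.univ : Finset (Equiv.Perm (Fin k)))),
      (∏ j, P (p.1.1.orderEmbOfFin p.1.2 (p.2 j)) j) *
        (Q.submatrix (fun j => p.1.1.orderEmbOfFin p.1.2 (p.2 j)) id).det := by
    refine Finset.sum_bij'
      (i := fun r hr => ⟨packSet r (by simpa using hr), packPerm r (by simpa using hr)⟩)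
      (j := fun p _ => fun j => p.1.1.orderEmbOfFin p.1.2 (p.2 j)) ?_ ?_ ?_ ?_ ?_
    · intro r hr; simp
    · intro p hp
      simp only [Finset.mem_filter, Finset.mem_univ, true_and]
      exact fun a b h => (Equiv.injective p.2) ((p.1.1.orderEmbOfFin p.1.2).injective h)
    · intro r hr
      funext j
      exact pack_spec r (by simpa using hr) j
    · intro p hp
      have hr : Function.Injective (fun j => p.1.1.orderEmbOfFin p.1.2 (p.2 j)) :=
        fun a b h => (Equiv.injective p.2) ((p.1.1.orderEmbOfFin p.1.2).injective h)
      have hset : packSet _ hr = p.1 := by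
        apply Subtype.ext
        simp only [packSet]
        ext x
        simp only [Finset.mem_image, Finset.mem_univ, true_and]
        constructor
        · rintro ⟨j, rfl⟩; exact Finset.orderEmbOfFin_mem _ _ _
        · intro hx
          have hx' : x ∈ Set.range (p.1.1.orderEmbOfFin p.1.2) := by
            rw [Finset.range_orderEmbOfFin]; exact_mod_cast hx
          obtain ⟨j, hj⟩ := hx'
          exact ⟨p.2.symm j, by simp [hj]⟩
      have hemb : ⇑((packSet _ hr).1.orderEmbOfFin (packSet _ hr).2)
          = ⇑(p.1.1.orderEmbOfFin p.1.2) := by rw [hset]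
      have hperm : packPerm _ hr = p.2 := by
        apply Equiv.ext; intro j
        refine (p.1.1.orderEmbOfFin p.1.2).injective ?_
        exact (congrFun hemb _).symm.trans
          (pack_spec (fun j => p.1.1.orderEmbOfFin p.1.2 (p.2 j)) hr j)
      obtain ⟨I, σ⟩ := p
      exact Sigma.ext hset (heq_of_eq hperm)
    · intro r hr
      congr 1
      · refine Finset.prod_congr rfl fun j _ => ?_
        rw [pack_spec r (by simpa using hr) j]
      · congr 1
        funext j j'
        rw [Matrix.submatrix_apply, Matrix.submatrix_apply, pack_spec r (by simpa using hr) j]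
  rw [h5, Finset.sum_sigma]
  refine Finset.sum_congr rfl fun I _ => ?_
  -- inner sum over permutations
  have h6 : ∀ σ : Equiv.Perm (Fin k),
      (Q.submatrix (fun j => I.1.orderEmbOfFin I.2 (σ j)) id).det =
        (Equiv.Perm.sign σ : ℤ) * (Q.submatrix (I.1.orderEmbOfFin I.2) id).det := by
    intro σ
    have := Matrix.det_permute σ (Q.submatrix (I.1.orderEmbOfFin I.2) id)
    rw [← this]
    rfl
  simp_rw [h6]
  rw [Matrix.det_apply' (P.submatrix (I.1.orderEmbOfFin I.2) id)]
  rw [Finset.sum_mul]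
  refine Finset.sum_congr rfl fun σ _ => ?_
  simp only [Matrix.submatrix_apply, id_eq]
  ring

end Aux

/-- For `n × m` matrices `F, G` over a commutative ring,
`det(1 + Fᵀ G) = Σ_P det(F_P) det(G_P)`, summing over all patterns `P = (I, J)` of every size
`k = 0, 1, …, m`; the empty pattern contributes `1`. -/
theorem det_one_add_transpose_mul {R : Type*} [CommRing R] {n m : ℕ}
    (F G : Matrix (Fin n) (Fin m) R) :
    (1 + Fᵀ * G).det =
      ∑ k ∈ Finset.range (m + 1),
        ∑ I : {s : Finset (Fin n) // s.card = k}, ∑ J : {s : Finset (Fin m) // s.card = k},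
          F.minorOn I J * G.minorOn I J := by
  classical
  rw [det_one_add_eq_sum]
  have step1 : ∀ s : Finset (Fin m),
      ((Fᵀ * G).submatrix (Subtype.val : {x // x ∈ s} → Fin m) Subtype.val).det =
      ∑ I : {t : Finset (Fin n) // t.card = s.card},
        F.minorOn I ⟨s, rfl⟩ * G.minorOn I ⟨s, rfl⟩ := by
    intro s
    rw [← Matrix.det_submatrix_equiv_self (s.orderIsoOfFin rfl).toEquiv]
    have hsub : ((Fᵀ * G).submatrix (Subtype.val : {x // x ∈ s} → Fin m)
          Subtype.val).submatrix (s.orderIsoOfFin rfl).toEquiv (s.orderIsoOfFin rfl).toEquiv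
        = (F.submatrix id (s.orderEmbOfFin rfl))ᵀ * (G.submatrix id (s.orderEmbOfFin rfl)) := by
      ext i j
      simp [Matrix.mul_apply, Finset.coe_orderIsoOfFin_apply]
    rw [hsub, cauchy_binet]
    refine Finset.sum_congr rfl fun I _ => ?_
    rw [Matrix.minorOn, Matrix.minorOn]
    congr 1
  simp_rw [step1]
  have maps : ∀ s : Finset (Fin m), s ∈ (Finset.univ : Finset (Finset (Fin m))) →
      s.card ∈ Finset.range (m + 1) := by
    intro s _
    rw [Finset.mem_range, Nat.lt_succ_iff]
    simpa using Finset.card_le_univ s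
  rw [← Finset.sum_fiberwise_of_maps_to maps (fun s =>
    ∑ I : {t : Finset (Fin n) // t.card = s.card},
      F.minorOn I ⟨s, rfl⟩ * G.minorOn I ⟨s, rfl⟩)]
  refine Finset.sum_congr rfl fun k _ => ?_
  rw [Finset.sum_comm]
  have hsub : ∀ x : Finset (Fin m), x ∈ Finset.univ.filter (fun s => s.card = k) ↔ x.card = k := by
    intro x; simp
  rw [Finset.sum_subtype _ hsub (fun s => ∑ I : {t : Finset (Fin n) // t.card = s.card},
      F.minorOn I ⟨s, rfl⟩ * G.minorOn I ⟨s, rfl⟩)]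
  refine Finset.sum_congr rfl fun J _ => ?_
  obtain ⟨s, hs⟩ := J
  subst hs
  rfl
end

section
/- Power rule for pseudo-determinants: For any n×n complex matrix A and any natural number m, Det(A^m) = Det(A)^m; that is, the product of the nonzero roots (with multiplicity) of the characteristic polynomial of A^m equals the m-th power of the product of the nonzero roots (with multiplicity) of the characteristic polynomial of A. -/
open Matrix Polynomial

/-- The pseudo-determinant of a square complex matrix: the product of the nonzero roots,
counted with multiplicity, of its characteristic polynomial `det(x·I − A)`; it equals `1`
when all eigenvalues are zero. -/
noncomputable def PDet {ι : Type*} [Fintype ι] [DecidableEq ι] (A : Matrix ι ι ℂ) : ℂ :=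
  (A.charpoly.roots.filter (· ≠ 0)).prod

private lemma eval_charpoly' {n : ℕ} (B : Matrix (Fin n) (Fin n) ℂ) (y : ℂ) :
    B.charpoly.eval y = det (y • (1 : Matrix (Fin n) (Fin n) ℂ) - B) := by
  have h : (charmatrix B).map (Polynomial.eval y) = y • (1 : Matrix (Fin n) (Fin n) ℂ) - B := by
    ext i j
    by_cases hij : i = j
    · subst hij; simp [charmatrix_apply_eq]
    · simp [charmatrix_apply_ne _ _ _ hij, Matrix.one_apply_ne hij]
  calc B.charpoly.eval y = (evalRingHom y) (det (charmatrix B)) := rfl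
    _ = det ((charmatrix B).map (evalRingHom y)) := RingHom.map_det _ _
    _ = det (y • (1 : Matrix (Fin n) (Fin n) ℂ) - B) := by rw [← h]; rfl

private lemma prod_map_neg' (s : Multiset ℂ) (f g : ℂ → ℂ) (h : ∀ x, f x = - g x) :
    (s.map f).prod = (-1 : ℂ) ^ Multiset.card s * (s.map g).prod := by
  have : s.map f = s.map (fun x => (-1 : ℂ) * g x) := by
    apply Multiset.map_congr rfl
    intro x _
    rw [h x]; ring
  rw [this, Multiset.prod_map_mul, Multiset.map_const', Multiset.prod_replicate]

private lemma prod_swap' {ι : Type*} (s : Finset ι) (t : Multiset ℂ) (f : ι → ℂ → ℂ) :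
    ∏ k ∈ s, (t.map (f k)).prod = (t.map (fun x => ∏ k ∈ s, f k x)).prod := by
  induction t using Multiset.induction with
  | empty => simp
  | cons a t ih => simp [Finset.prod_mul_distrib, ih]

private lemma roots_charpoly_pow {n : ℕ} (A : Matrix (Fin n) (Fin n) ℂ) (m : ℕ) (hm : 0 < m) :
    (A ^ m).charpoly.roots = A.charpoly.roots.map (fun l => l ^ m) := by
  set r := A.charpoly.roots with hr
  have hsplit : A.charpoly = (r.map (fun a => X - C a)).prod :=
    (IsAlgClosed.splits _).eq_prod_roots_of_monic (A.charpoly_monic)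
  have hcard : Multiset.card r = n := by
    have := (splits_iff_card_roots.mp (IsAlgClosed.splits A.charpoly))
    rwa [charpoly_natDegree_eq_dim, Fintype.card_fin] at this
  have key : (A ^ m).charpoly = ((r.map (fun l => l ^ m)).map (fun a => X - C a)).prod := by
    apply Polynomial.funext
    intro y
    obtain ⟨μ, hμ⟩ := IsAlgClosed.exists_pow_nat_eq y hm
    have hζ : IsPrimitiveRoot (Complex.exp (2 * Real.pi * Complex.I / m)) m :=
      Complex.isPrimitiveRoot_exp m hm.ne'
    set ζ := Complex.exp (2 * Real.pi * Complex.I / m) with hζdef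
    have hfact : (X ^ m - C y : ℂ[X]) = ∏ k ∈ Finset.range m, (X - C (ζ ^ k * μ)) :=
      X_pow_sub_C_eq_prod hζ hm hμ
    -- the multiplicative map p ↦ det (aeval A p)
    let φ : ℂ[X] →* ℂ := Matrix.detMonoidHom.comp (aeval A : ℂ[X] →ₐ[ℂ] _).toRingHom.toMonoidHom
    have hφ : ∀ p : ℂ[X], φ p = det (aeval A p) := fun p => rfl
    have haev : aeval A (X ^ m - C y) = A ^ m - y • (1 : Matrix (Fin n) (Fin n) ℂ) := by
      simp [Algebra.algebraMap_eq_smul_one]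
    have hdet1 : det (A ^ m - y • (1 : Matrix (Fin n) (Fin n) ℂ)) =
        ∏ k ∈ Finset.range m, det (A - (ζ ^ k * μ) • (1 : Matrix (Fin n) (Fin n) ℂ)) := by
      rw [← haev, ← hφ, hfact, map_prod]
      apply Finset.prod_congr rfl
      intro k _
      rw [hφ]
      congr 1
      rw [map_sub, aeval_X, aeval_C, Algebra.algebraMap_eq_smul_one]
    have hdetlin : ∀ c : ℂ, det (A - c • (1 : Matrix (Fin n) (Fin n) ℂ)) =
        (r.map (fun l => l - c)).prod := by
      intro c
      have h1 : A - c • (1 : Matrix (Fin n) (Fin n) ℂ) =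
          -(c • (1 : Matrix (Fin n) (Fin n) ℂ) - A) := (neg_sub _ _).symm
      have h2 : A.charpoly.eval c = (r.map (fun l => c - l)).prod := by
        rw [hsplit]
        rw [show Polynomial.eval c = (evalRingHom c : ℂ[X] → ℂ) from rfl,
          map_multiset_prod, Multiset.map_map]
        simp
      rw [h1, Matrix.det_neg, Fintype.card_fin, ← eval_charpoly', h2,
        prod_map_neg' r (fun l => l - c) (fun l => c - l) (fun x => by ring), hcard]
    -- LHS
    have lhs : ((A ^ m).charpoly).eval y = (-1 : ℂ) ^ n *
        (r.map (fun l => l ^ m - y)).prod := by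
      rw [eval_charpoly']
      have h1 : y • (1 : Matrix (Fin n) (Fin n) ℂ) - A ^ m =
          -(A ^ m - y • (1 : Matrix (Fin n) (Fin n) ℂ)) := (neg_sub _ _).symm
      rw [h1, Matrix.det_neg, Fintype.card_fin, hdet1]
      congr 1
      have := prod_swap' (Finset.range m) r (fun k l => l - ζ ^ k * μ)
      calc ∏ k ∈ Finset.range m, det (A - (ζ ^ k * μ) • (1 : Matrix (Fin n) (Fin n) ℂ))
          = ∏ k ∈ Finset.range m, (r.map (fun l => l - ζ ^ k * μ)).prod := by
            exact Finset.prod_congr rfl fun k _ => hdetlin _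
        _ = (r.map (fun l => ∏ k ∈ Finset.range m, (l - ζ ^ k * μ))).prod := this
        _ = (r.map (fun l => l ^ m - y)).prod := by
            apply congrArg
            apply Multiset.map_congr rfl
            intro l _
            have h1 := congrArg (Polynomial.eval l) hfact
            rw [Polynomial.eval_prod] at h1
            simp only [eval_sub, eval_pow, eval_X, eval_C] at h1
            exact h1.symm
    -- RHS
    have rhs : (((r.map (fun l => l ^ m)).map (fun a => X - C a)).prod).eval y =
        (r.map (fun l => y - l ^ m)).prod := by
      rw [show Polynomial.eval y = (evalRingHom y : ℂ[X] → ℂ) from rfl,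
        map_multiset_prod, Multiset.map_map, Multiset.map_map]
      simp
    rw [lhs, rhs,
      prod_map_neg' r (fun l => y - l ^ m) (fun l => l ^ m - y) (fun x => by ring), hcard]
  rw [key, Polynomial.roots_multiset_prod_X_sub_C]

/-- Power rule for pseudo-determinants: for any `n × n` complex matrix `A` and any natural
number `m`, `Det(A^m) = Det(A)^m`. -/
theorem pdet_pow {n : ℕ} (A : Matrix (Fin n) (Fin n) ℂ) (m : ℕ) :
    PDet (A ^ m) = (PDet A) ^ m := by
  rcases Nat.eq_zero_or_pos m with hm | hm
  · subst hm
    rw [pow_zero, pow_zero]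
    unfold PDet
    have hone : (1 : Matrix (Fin n) (Fin n) ℂ).charpoly = (X - C 1) ^ n := by
      apply Polynomial.funext
      intro y
      rw [eval_charpoly']
      have : y • (1 : Matrix (Fin n) (Fin n) ℂ) - 1 = (y - 1) • 1 := by
        rw [sub_smul, one_smul]
      rw [this, Matrix.det_smul, det_one, Fintype.card_fin]
      simp
    rw [hone, Polynomial.roots_pow, Polynomial.roots_X_sub_C]
    rw [Multiset.filter_eq_self.mpr]
    · simp [Multiset.nsmul_singleton, Multiset.prod_replicate]
    · intro a ha
      obtain ⟨-, h1⟩ := Multiset.mem_nsmul.mp ha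
      rw [Multiset.mem_singleton] at h1
      subst h1
      simp
  · unfold PDet
    rw [roots_charpoly_pow A m hm]
    rw [Multiset.filter_map]
    have hpred : (A.charpoly.roots.filter ((fun x => x ≠ 0) ∘ (fun l => l ^ m))) =
        A.charpoly.roots.filter (· ≠ 0) := by
      apply Multiset.filter_congr
      intro x _
      exact pow_ne_zero_iff hm.ne'
    rw [hpred,
      show (fun l : ℂ => l ^ m) = fun l : ℂ => id l ^ m from rfl,
      Multiset.prod_map_pow, Multiset.map_id]
end

section
/- Chebotarev–Shamis forest theorem: Let G be a finite simple graph on a vertex set V and let L be its Laplacian matrix over ℝ. Then det(I + L) = Σ_H ∏_c |c|, where the sum runs over all acyclic simple graphs H on the vertex set V with H ≤ G (every edge of H is an edge of G), the product runs over the connected components c of H, and |c| denotes the number of vertices in the component c. Equivalently, det(I + L) is the number of rooted spanning forests of G, a rooted spanning forest being a spanning acyclic subgraph together with a choice of one root vertex in each of its connected components. -/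
open Matrix

open Matrix Finset

set_option maxRecDepth 8000

namespace CSF

variable {V : Type*} [Fintype V] [DecidableEq V]

/-- iterate a partial function -/
def iter (f : V → Option V) : ℕ → V → Option V
  | 0, v => some v
  | (n+1), v => (f v).bind (iter f n)

@[simp] lemma iter_zero (f : V → Option V) (v : V) : iter f 0 v = some v := rfl

lemma iter_one (f : V → Option V) (v : V) : iter f 1 v = f v := by
  cases h : f v <;> simp [iter, h]

lemma iter_succ (f : V → Option V) (n : ℕ) (v : V) :
    iter f (n+1) v = (f v).bind (iter f n) := rfl

lemma iter_succ' (f : V → Option V) (n : ℕ) (v : V) :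
    iter f (n+1) v = (iter f n v).bind f := by
  induction n generalizing v with
  | zero => simp [iter_one, iter]
  | succ n ih =>
    rw [iter_succ, iter_succ]
    cases h : f v with
    | none => simp
    | some w => simp [ih w]

lemma iter_add (f : V → Option V) (a b : ℕ) (v : V) :
    iter f (a + b) v = (iter f a v).bind (iter f b) := by
  induction a generalizing v with
  | zero => simp
  | succ a ih =>
    have : a + 1 + b = (a + b) + 1 := by omega
    rw [this, iter_succ, iter_succ]
    cases h : f v with
    | none => simp
    | some w => simp [ih w]

/-- no directed cycles -/
def Acyc (f : V → Option V) : Prop := ∀ v k, iter f (k+1) v ≠ some v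

/-- the matrix `1 - P_f` -/
noncomputable def Mat (f : V → Option V) : Matrix V V ℝ :=
  Matrix.of fun i j => (if i = j then (1:ℝ) else 0) - (if f i = some j then (1:ℝ) else 0)

lemma det_Mat_of_not_acyc (f : V → Option V) (hf : ¬ Acyc f) : (Mat f).det = 0 := by
  simp only [Acyc, not_forall, not_not] at hf
  obtain ⟨v, k, hvk⟩ := hf
  set x : ℕ → V := fun t => (iter f t v).getD v with hxdef
  have hx : ∀ t ≤ k+1, iter f t v = some (x t) := by
    intro t ht
    obtain ⟨s, hs⟩ := Nat.exists_eq_add_of_le ht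
    rw [hs, iter_add] at hvk
    cases h : iter f t v with
    | none => rw [h] at hvk; simp at hvk
    | some w => simp [hxdef, h]
  have hstep : ∀ t ≤ k, f (x t) = some (x (t+1)) := by
    intro t ht
    have h1 := hx t (by omega)
    have h2 := hx (t+1) (by omega)
    rw [iter_succ', h1] at h2
    exact h2
  have hx0 : x 0 = v := by simp [hxdef]
  have hxk : x (k+1) = v := by
    have := hx (k+1) le_rfl
    rw [hvk] at this; exact (Option.some_injective _ this).symm
  set u : V → ℝ := fun j => ∑ t ∈ range (k+1), if x t = j then (1:ℝ) else 0 with hudef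
  have hu0 : u ≠ 0 := by
    intro h
    have : u (x 0) = 0 := by rw [h]; rfl
    simp only [hudef] at this
    have hle : (1:ℝ) ≤ ∑ t ∈ range (k+1), if x t = x 0 then (1:ℝ) else 0 := by
      have h0 : (0:ℕ) ∈ range (k+1) := by simp
      calc (1:ℝ) = if x 0 = x 0 then (1:ℝ) else 0 := by simp
        _ ≤ _ := Finset.single_le_sum (f := fun t => if x t = x 0 then (1:ℝ) else 0)
            (fun t _ => by positivity) h0
    rw [this] at hle; linarith
  have hvm : u ᵥ* (Mat f) = 0 := by
    funext j
    have : (u ᵥ* (Mat f)) j = ∑ i, u i * Mat f i j := rfl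
    rw [this]
    simp only [hudef, Finset.sum_mul, Pi.zero_apply]
    rw [Finset.sum_comm]
    have hinner : ∀ t ∈ range (k+1),
        (∑ i, (if x t = i then (1:ℝ) else 0) * Mat f i j) =
          (if x t = j then (1:ℝ) else 0) - (if x (t+1) = j then (1:ℝ) else 0) := by
      intro t ht
      rw [Finset.sum_eq_single (x t)]
      · simp only [if_pos rfl, one_mul, Mat, Matrix.of_apply,
          hstep t (by simpa using Nat.lt_succ_iff.mp (Finset.mem_range.mp ht)),
          Option.some_inj]
        simp
      · intro i _ hi
        rw [if_neg (Ne.symm hi), zero_mul]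
      · intro h; exact absurd (Finset.mem_univ _) h
    rw [Finset.sum_congr rfl hinner, Finset.sum_range_sub' (fun t => if x t = j then (1:ℝ) else 0)]
    rw [hx0, hxk]
    simp
  rw [← Matrix.exists_vecMul_eq_zero_iff]
  exact ⟨u, hu0, hvm⟩

lemma exists_iter_none (f : V → Option V) (hf : Acyc f) (v : V) :
    ∃ t, iter f (t+1) v = none := by
  by_contra h
  push_neg at h
  have h' : ∀ t, iter f t v ≠ none := by
    intro t
    cases t with
    | zero => simp
    | succ t => exact h t
  set x : ℕ → V := fun t => (iter f t v).getD v with hxdef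
  have hx : ∀ t, iter f t v = some (x t) := by
    intro t
    cases ht : iter f t v with
    | none => exact absurd ht (h' t)
    | some w => simp [hxdef, ht]
  obtain ⟨a, b, hab, hxab⟩ := Fintype.exists_ne_map_eq_of_card_lt
    (fun t : Fin (Fintype.card V + 1) => x t) (by simp)
  have key : ∀ a b : ℕ, a < b → x a = x b → False := by
    intro a b hlt heq
    have h1 : iter f (a + (b - a)) v = (iter f a v).bind (iter f (b-a)) := iter_add f a (b-a) v
    rw [hx a] at h1
    simp only [Option.bind_some] at h1
    have hab' : a + (b - a) = b := by omega
    rw [hab', hx b, ← heq] at h1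
    obtain ⟨c, hc⟩ : ∃ c, b - a = c + 1 := ⟨b - a - 1, by omega⟩
    exact hf (x a) c (by rw [← hc]; exact h1.symm)
  rcases hab.lt_or_gt with h | h
  · exact key _ _ h hxab
  · exact key _ _ h hxab.symm

lemma exists_sink (f : V → Option V) (hf : Acyc f) {v w : V} (hv : f v = some w) :
    ∃ z y, f z = some y ∧ f y = none := by
  obtain ⟨t₀, ht₀⟩ := exists_iter_none f hf v
  have hP : ∃ t, iter f (t+1) v = none := ⟨t₀, ht₀⟩
  set t := Nat.find hP with htdef
  have hspec : iter f (t+1) v = none := Nat.find_spec hP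
  rcases Nat.eq_zero_or_pos t with h0 | hpos
  · rw [h0, iter_one, hv] at hspec; exact absurd hspec (by simp)
  obtain ⟨s, hs⟩ : ∃ s, t = s + 1 := ⟨t - 1, by omega⟩
  have h1 : iter f (s+1) v ≠ none := Nat.find_min hP (by omega)
  obtain ⟨y, hy⟩ := Option.ne_none_iff_exists'.mp h1
  have h2 : iter f s v ≠ none := by
    cases s with
    | zero => simp
    | succ s' => exact Nat.find_min hP (by omega)
  obtain ⟨z, hz⟩ := Option.ne_none_iff_exists'.mp h2
  refine ⟨z, y, ?_, ?_⟩
  · have := iter_succ' f s v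
    rw [hy, hz] at this
    simpa using this.symm
  · have := iter_succ' f (s+1) v
    rw [hs] at hspec
    rw [hspec, hy] at this
    simpa using this.symm

lemma Mat_apply_none {f : V → Option V} {z : V} (hz : f z = none) :
    Mat f z = fun j => if z = j then (1:ℝ) else 0 := by
  funext j
  simp [Mat, hz]

lemma acyc_update_none {f : V → Option V} (hf : Acyc f) (z : V) :
    Acyc (Function.update f z none) := by
  set f' := Function.update f z none with hf'
  have key : ∀ k v x, iter f' k v = some x → iter f k v = some x := by
    intro k
    induction k with
    | zero => intro v x h; exact h
    | succ k ih =>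
      intro v x h
      rw [iter_succ] at h ⊢
      cases hv : f' v with
      | none => rw [hv] at h; simp at h
      | some w =>
        rw [hv] at h
        simp only [Option.bind_some] at h
        have hvz : v ≠ z := by
          intro hh; rw [hh] at hv; simp [hf'] at hv
        have : f v = some w := by rw [← hv, hf', Function.update_of_ne hvz]
        rw [this]
        simpa using ih w x h
  intro v k hk
  exact hf v k (key _ _ _ hk)

lemma det_Mat_of_acyc (f : V → Option V) (hf : Acyc f) : (Mat f).det = 1 := by
  suffices H : ∀ (n : ℕ) (f : V → Option V),
      (Finset.univ.filter fun v => f v ≠ none).card = n → Acyc f → (Mat f).det = 1 from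
    H _ f rfl hf
  intro n
  induction n using Nat.strong_induction_on with
  | _ n ih =>
    intro f hcard hf
    by_cases hall : ∀ v, f v = none
    · have : Mat f = 1 := by
        ext i j
        simp [Mat, hall i, Matrix.one_apply]
      rw [this, Matrix.det_one]
    push_neg at hall
    obtain ⟨v, hv⟩ := hall
    obtain ⟨w, hw⟩ := Option.ne_none_iff_exists'.mp hv
    obtain ⟨z, y, hz, hy⟩ := exists_sink f hf hw
    have hzy : z ≠ y := by rintro rfl; rw [hz] at hy; simp at hy
    set f' := Function.update f z none with hf'def
    have hf'z : f' z = none := by simp [hf'def]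
    have hf'y : f' y = none := by rw [hf'def, Function.update_of_ne hzy.symm]; exact hy
    have hf'acyc : Acyc f' := acyc_update_none hf z
    have hrowf' : Mat f' z = fun j => if z = j then (1:ℝ) else 0 := Mat_apply_none hf'z
    have hM : Mat f = Matrix.updateRow (Mat f') z
        ((fun j => if z = j then (1:ℝ) else 0) + (-1 : ℝ) • fun j => if y = j then (1:ℝ) else 0) := by
      ext i j
      by_cases hiz : i = z
      · subst hiz
        rw [Matrix.updateRow_self]
        simp [Mat, hz, sub_eq_add_neg]
      · rw [Matrix.updateRow_ne hiz]
        simp [Mat, hf'def, Function.update_of_ne hiz]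
    rw [hM, Matrix.det_updateRow_add, Matrix.det_updateRow_smul]
    have e1 : Matrix.updateRow (Mat f') z (fun j => if z = j then (1:ℝ) else 0) = Mat f' := by
      rw [← hrowf', Matrix.updateRow_eq_self]
    have e2 : (Matrix.updateRow (Mat f') z fun j => if y = j then (1:ℝ) else 0).det = 0 := by
      apply Matrix.det_zero_of_row_eq hzy
      rw [Matrix.updateRow_self, Matrix.updateRow_ne hzy.symm]
      exact (Mat_apply_none hf'y).symm
    rw [e1, e2, mul_zero, add_zero]
    have hzmem : z ∈ Finset.univ.filter fun v => f v ≠ none := by simp [hz]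
    have hcard' : (Finset.univ.filter fun v => f' v ≠ none).card = n - 1 := by
      have : (Finset.univ.filter fun v => f' v ≠ none) =
          (Finset.univ.filter fun v => f v ≠ none).erase z := by
        ext u
        simp only [Finset.mem_filter, Finset.mem_erase, Finset.mem_univ, true_and]
        constructor
        · intro hu
          have huz : u ≠ z := by rintro rfl; exact hu hf'z
          rw [hf'def, Function.update_of_ne huz] at hu
          exact ⟨huz, hu⟩
        · rintro ⟨huz, hu⟩
          rw [hf'def, Function.update_of_ne huz]
          exact hu
      rw [this, Finset.card_erase_of_mem hzmem, hcard]
    have hn : 0 < n := by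
      rw [← hcard]
      exact Finset.card_pos.mpr ⟨z, hzmem⟩
    exact ih (n-1) (by omega) f' hcard' hf'acyc

variable (G : SimpleGraph V) [DecidableRel G.Adj]

/-- allowed values finset -/
noncomputable def allowed (i : V) : Finset (Option V) :=
  insert none ((G.neighborFinset i).image some)

noncomputable def validF : Finset (V → Option V) := Fintype.piFinset (allowed G)

/-- row selector -/
noncomputable def grow (i : V) : Option V → (V → ℝ)
  | none => fun j => if i = j then (1:ℝ) else 0
  | some w => fun j => (if i = j then (1:ℝ) else 0) - (if w = j then (1:ℝ) else 0)

lemma one_add_lap_eq : (1 + G.lapMatrix ℝ) =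
    Matrix.of fun i => ∑ o ∈ allowed G i, grow i o := by
  ext i j
  have hnone : (none : Option V) ∉ (G.neighborFinset i).image some := by simp
  rw [Matrix.of_apply]
  have : (∑ o ∈ allowed G i, grow i o) j = ∑ o ∈ allowed G i, grow i o j := by
    simp
  rw [this, allowed, Finset.sum_insert hnone, Finset.sum_image (by simp)]
  have hsum : ∑ w ∈ G.neighborFinset i, grow i (some w) j
      = (G.degree i : ℝ) * (if i = j then 1 else 0) - (if G.Adj i j then 1 else 0) := by
    simp only [grow]
    rw [Finset.sum_sub_distrib, Finset.sum_const, Finset.sum_ite_eq']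
    have hdeg : (G.neighborFinset i).card = G.degree i := rfl
    have hmem : (j ∈ G.neighborFinset i) ↔ G.Adj i j := G.mem_neighborFinset i j
    rw [hdeg, nsmul_eq_mul, if_congr hmem rfl rfl]
  rw [hsum]
  simp only [grow, Matrix.add_apply, Matrix.one_apply, SimpleGraph.lapMatrix,
    Matrix.sub_apply, SimpleGraph.degMatrix, Matrix.diagonal_apply, SimpleGraph.adjMatrix_apply]
  by_cases hij : i = j <;> simp [hij] <;> ring

lemma Mat_eq_grow (r : V → Option V) : Mat r = Matrix.of fun i => grow i (r i) := by
  ext i j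
  cases h : r i with
  | none => simp [Mat, grow, h]
  | some w => simp [Mat, grow, h]

open scoped Classical in
lemma partA : (1 + G.lapMatrix ℝ).det = (((validF G).filter Acyc).card : ℝ) := by
  rw [one_add_lap_eq]
  have hdet : ∀ (M : Matrix V V ℝ), M.det = Matrix.detRowAlternating M := fun _ => rfl
  rw [hdet]
  have hexp := (Matrix.detRowAlternating (R := ℝ) (n := V)).toMultilinearMap.map_sum_finset
    (fun i o => grow i o) (allowed G)
  simp only [AlternatingMap.coe_multilinearMap] at hexp
  have : Matrix.detRowAlternating (R := ℝ) (Matrix.of fun i => ∑ o ∈ allowed G i, grow i o)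
      = ∑ r ∈ Fintype.piFinset (allowed G),
          Matrix.detRowAlternating (R := ℝ) (fun i => grow i (r i)) := hexp
  rw [this]
  have hterm : ∀ r ∈ Fintype.piFinset (allowed G),
      Matrix.detRowAlternating (R := ℝ) (fun i => grow i (r i))
        = if Acyc r then (1:ℝ) else 0 := by
    intro r _
    have : Matrix.detRowAlternating (R := ℝ) (fun i => grow i (r i)) = (Mat r).det := by
      rw [Mat_eq_grow]; rfl
    rw [this]
    by_cases h : Acyc r
    · rw [if_pos h, det_Mat_of_acyc r h]
    · rw [if_neg h, det_Mat_of_not_acyc r h]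
  rw [Finset.sum_congr rfl hterm, Finset.sum_boole]
  rfl

/-! ### Part B : combinatorics -/

def graphOf (f : V → Option V) : SimpleGraph V :=
  SimpleGraph.fromRel (fun a b => f a = some b)

lemma ne_of_some {f : V → Option V} (hf : Acyc f) {v w : V} (h : f v = some w) : v ≠ w := by
  rintro rfl
  exact hf v 0 (by rw [iter_one]; exact h)

lemma adj_graphOf {f : V → Option V} (hf : Acyc f) {v w : V} (h : f v = some w) :
    (graphOf f).Adj v w := by
  rw [graphOf, SimpleGraph.fromRel_adj]
  exact ⟨ne_of_some hf h, Or.inl h⟩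

lemma graphOf_adj_iff {f : V → Option V} {v w : V} :
    (graphOf f).Adj v w ↔ v ≠ w ∧ (f v = some w ∨ f w = some v) := by
  rw [graphOf, SimpleGraph.fromRel_adj]

noncomputable def depth (f : V → Option V) (hf : Acyc f) (v : V) : ℕ :=
  Nat.find (exists_iter_none f hf v)

lemma iter_depth_ne_none (f : V → Option V) (hf : Acyc f) (v : V) :
    iter f (depth f hf v) v ≠ none := by
  cases hd : depth f hf v with
  | zero => simp
  | succ s =>
    have hd' : Nat.find (exists_iter_none f hf v) = s + 1 := hd
    have := Nat.find_min (exists_iter_none f hf v) (m := s) (by omega)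
    exact this

lemma iter_depth_succ_none (f : V → Option V) (hf : Acyc f) (v : V) :
    iter f (depth f hf v + 1) v = none := Nat.find_spec (exists_iter_none f hf v)

lemma depth_eq_zero (f : V → Option V) (hf : Acyc f) {v : V} (h : f v = none) :
    depth f hf v = 0 := by
  have : iter f (0 + 1) v = none := by rw [iter_one]; exact h
  exact Nat.eq_zero_of_le_zero (Nat.find_le this)

lemma depth_succ (f : V → Option V) (hf : Acyc f) {v w : V} (h : f v = some w) :
    depth f hf v = depth f hf w + 1 := by
  have key : ∀ t, iter f (t + 1) v = iter f t w := by
    intro t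
    rw [iter_succ, h, Option.bind_some]
  apply le_antisymm
  · exact Nat.find_le (by rw [key]; exact iter_depth_succ_none f hf w)
  · rw [Nat.succ_le_iff]
    by_contra hlt
    push_neg at hlt
    -- depth v ≤ depth w
    cases hd : depth f hf v with
    | zero =>
      have := iter_depth_succ_none f hf v
      rw [hd, iter_one, h] at this
      simp at this
    | succ s =>
      have hle : s < depth f hf w := by omega
      have := Nat.find_min (exists_iter_none f hf w) hle
      have h2 := iter_depth_succ_none f hf v
      rw [hd, key] at h2
      exact this h2

noncomputable def rootOf (f : V → Option V) (hf : Acyc f) (v : V) : V :=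
  (iter f (depth f hf v) v).getD v

lemma iter_depth_eq_root (f : V → Option V) (hf : Acyc f) (v : V) :
    iter f (depth f hf v) v = some (rootOf f hf v) := by
  cases h : iter f (depth f hf v) v with
  | none => exact absurd h (iter_depth_ne_none f hf v)
  | some w => simp [rootOf, h]

lemma f_rootOf (f : V → Option V) (hf : Acyc f) (v : V) : f (rootOf f hf v) = none := by
  have h1 := iter_depth_succ_none f hf v
  rw [iter_succ', iter_depth_eq_root f hf v] at h1
  simpa using h1

lemma rootOf_eq_self (f : V → Option V) (hf : Acyc f) {v : V} (h : f v = none) :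
    rootOf f hf v = v := by
  have := iter_depth_eq_root f hf v
  rw [depth_eq_zero f hf h] at this
  simpa [rootOf, depth_eq_zero f hf h] using this.symm

lemma rootOf_step (f : V → Option V) (hf : Acyc f) {v w : V} (h : f v = some w) :
    rootOf f hf v = rootOf f hf w := by
  have h1 := iter_depth_eq_root f hf v
  rw [depth_succ f hf h, iter_succ, h, Option.bind_some, iter_depth_eq_root f hf w] at h1
  exact (Option.some_injective _ h1).symm

lemma reachable_rootOf (f : V → Option V) (hf : Acyc f) (v : V) :
    (graphOf f).Reachable v (rootOf f hf v) := by
  suffices H : ∀ (n : ℕ) (v : V), depth f hf v = n → (graphOf f).Reachable v (rootOf f hf v) from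
    H _ v rfl
  intro n
  induction n with
  | zero =>
    intro v hd
    have : iter f (0+1) v = none := by rw [← hd]; exact iter_depth_succ_none f hf v
    rw [iter_one] at this
    rw [rootOf_eq_self f hf this]
  | succ n ih =>
    intro v hd
    have hvne : f v ≠ none := by
      intro h
      rw [depth_eq_zero f hf h] at hd; omega
    obtain ⟨w, hw⟩ := Option.ne_none_iff_exists'.mp hvne
    have hdw : depth f hf w = n := by
      have := depth_succ f hf hw; omega
    have := ih w hdw
    rw [rootOf_step f hf hw]
    exact ((adj_graphOf hf hw).reachable).trans this

lemma rootOf_eq_of_reachable (f : V → Option V) (hf : Acyc f) {u v : V}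
    (h : (graphOf f).Reachable u v) : rootOf f hf u = rootOf f hf v := by
  obtain ⟨p⟩ := h
  induction p with
  | nil => rfl
  | @cons a b c hab p ih =>
    rw [← ih]
    rw [graphOf_adj_iff] at hab
    rcases hab.2 with h1 | h1
    · exact rootOf_step f hf h1
    · exact (rootOf_step f hf h1).symm

lemma depth_rootOf (f : V → Option V) (hf : Acyc f) (v : V) :
    depth f hf (rootOf f hf v) = 0 :=
  depth_eq_zero f hf (f_rootOf f hf v)

lemma depth_le_of_adj (f : V → Option V) (hf : Acyc f) {a b : V} (h : (graphOf f).Adj a b) :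
    depth f hf a ≤ depth f hf b + 1 := by
  rw [graphOf_adj_iff] at h
  rcases h.2 with h1 | h1
  · rw [depth_succ f hf h1]
  · rw [depth_succ f hf h1]; omega

lemma depth_le_walk (f : V → Option V) (hf : Acyc f) {a b : V} (p : (graphOf f).Walk a b) :
    depth f hf a ≤ depth f hf b + p.length := by
  induction p with
  | nil => simp
  | @cons a c b hac p ih =>
    have := depth_le_of_adj f hf hac
    simpa [SimpleGraph.Walk.length_cons] using le_trans this (by omega)

lemma exists_walk_depth (f : V → Option V) (hf : Acyc f) (v : V) :
    ∃ p : (graphOf f).Walk v (rootOf f hf v), p.length = depth f hf v := by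
  suffices H : ∀ (n : ℕ) (v : V), depth f hf v = n →
      ∃ p : (graphOf f).Walk v (rootOf f hf v), p.length = depth f hf v from H _ v rfl
  intro n
  induction n with
  | zero =>
    intro v hd
    have h0 : iter f (0+1) v = none := by rw [← hd]; exact iter_depth_succ_none f hf v
    rw [iter_one] at h0
    refine ⟨SimpleGraph.Walk.nil.copy rfl (rootOf_eq_self f hf h0).symm, ?_⟩
    simp [hd]
  | succ n ih =>
    intro v hd
    have hvne : f v ≠ none := by
      intro h; rw [depth_eq_zero f hf h] at hd; omega
    obtain ⟨w, hw⟩ := Option.ne_none_iff_exists'.mp hvne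
    have hdw : depth f hf w = n := by have := depth_succ f hf hw; omega
    obtain ⟨p, hp⟩ := ih w hdw
    refine ⟨(SimpleGraph.Walk.cons (adj_graphOf hf hw) p).copy rfl (rootOf_step f hf hw).symm, ?_⟩
    simp [hp, hdw, hd]

lemma dist_rootOf (f : V → Option V) (hf : Acyc f) (v : V) :
    (graphOf f).dist v (rootOf f hf v) = depth f hf v := by
  apply le_antisymm
  · obtain ⟨p, hp⟩ := exists_walk_depth f hf v
    exact hp ▸ SimpleGraph.dist_le p
  · obtain ⟨p, hp⟩ := (reachable_rootOf f hf v).exists_walk_length_eq_dist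
    have := depth_le_walk f hf p
    rw [hp, depth_rootOf f hf v] at this
    simpa using this

lemma graphOf_isAcyclic {f : V → Option V} (hf : Acyc f) : (graphOf f).IsAcyclic := by
  intro v c hc
  have hsupne : c.support.toFinset.Nonempty := ⟨v, by simp⟩
  obtain ⟨m, hm, hmax⟩ := Finset.exists_max_image c.support.toFinset (depth f hf) hsupne
  rw [List.mem_toFinset] at hm
  have hmax' : ∀ u ∈ c.support, depth f hf u ≤ depth f hf m := by
    intro u hu; exact hmax u (List.mem_toFinset.mpr hu)
  have hmemtail : ∀ u, u ∈ (c.rotate m hm).support.tail → u ∈ c.support := by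
    intro u hu
    have hperm := SimpleGraph.Walk.support_rotate c m hm
    have : u ∈ c.support.tail := hperm.mem_iff.mp hu
    rw [SimpleGraph.Walk.support_eq_cons c]
    exact List.mem_cons_of_mem _ this
  have key : ∀ (c₀ : (graphOf f).Walk m m), c₀.IsCycle →
      (∀ u ∈ c₀.support.tail, u ∈ c.support) → False := by
    intro c₀ hc₀ hmem
    cases c₀ with
    | nil => exact SimpleGraph.Walk.IsCycle.not_of_nil hc₀
    | @cons _ x _ hmx q =>
      have hxc : x ∈ c.support := by
        apply hmem
        simp [SimpleGraph.Walk.support_cons]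
      -- last vertex before returning to m
      have hqlen : 2 ≤ q.length := by
        have := hc₀.three_le_length
        simp only [SimpleGraph.Walk.length_cons] at this
        omega
      rcases hq : q.reverse with _ | @⟨_, y, _, hmy, q₂⟩
      · have : q.length = 0 := by
          have := congrArg SimpleGraph.Walk.length hq
          simpa using this
        omega
      · have hyq : y ∈ q.support := by
          have : y ∈ q.reverse.support := by
            rw [hq]
            simp [SimpleGraph.Walk.support_cons, SimpleGraph.Walk.start_mem_support]
          rwa [SimpleGraph.Walk.support_reverse, List.mem_reverse] at this
        have hyc : y ∈ c.support := by
          apply hmem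
          simp only [SimpleGraph.Walk.support_cons, List.tail_cons]
          exact hyq
        have hmyq : s(m, y) ∈ q.edges := by
          have : s(m, y) ∈ q.reverse.edges := by
            rw [hq]; simp [SimpleGraph.Walk.edges_cons]
          rwa [SimpleGraph.Walk.edges_reverse, List.mem_reverse] at this
        have hnodup : (SimpleGraph.Walk.cons hmx q).edges.Nodup := hc₀.edges_nodup
        rw [SimpleGraph.Walk.edges_cons] at hnodup
        have hxy : x ≠ y := by
          rintro rfl
          exact (List.nodup_cons.mp hnodup).1 hmyq
        have hfx : f m = some x := by
          rcases (graphOf_adj_iff.mp hmx).2 with h1 | h1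
          · exact h1
          · exfalso
            have := depth_succ f hf h1
            have := hmax' x hxc
            have hmc : m ∈ c.support := hm
            omega
        have hfy : f m = some y := by
          rcases (graphOf_adj_iff.mp hmy).2 with h1 | h1
          · exact h1
          · exfalso
            have := depth_succ f hf h1
            have := hmax' y hyc
            omega
        rw [hfx] at hfy
        exact hxy (Option.some_injective _ hfy)
  exact key (c.rotate m hm) (hc.rotate hm) hmemtail

section Psi

variable {H : SimpleGraph V}

lemma dist_split {b t x : V} (p : H.Walk b t) (hx : x ∈ p.support) :
    H.dist b x + H.dist x t ≤ p.length := by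
  have hspec := p.take_spec hx
  have hlen := congrArg SimpleGraph.Walk.length hspec
  rw [SimpleGraph.Walk.length_append] at hlen
  have h1 := SimpleGraph.dist_le (p.takeUntil x hx)
  have h2 := SimpleGraph.dist_le (p.dropUntil x hx)
  omega

lemma shortest_path {v t : V} (hreach : H.Reachable v t) :
    ∃ p : H.Walk v t, p.IsPath ∧ p.length = H.dist v t := by
  obtain ⟨p, hp⟩ := hreach.exists_walk_length_eq_dist
  refine ⟨p.bypass, p.bypass_isPath, le_antisymm ?_ (SimpleGraph.dist_le _)⟩
  exact le_trans p.length_bypass_le hp.le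

lemma exists_step {v t : V} (hreach : H.Reachable v t) (hne : v ≠ t) :
    ∃ w, H.Adj v w ∧ H.dist w t + 1 = H.dist v t := by
  obtain ⟨p, hp⟩ := hreach.exists_walk_length_eq_dist
  cases p with
  | nil => exact absurd rfl hne
  | @cons _ w _ h q =>
    refine ⟨w, h, ?_⟩
    have h1 : H.dist w t ≤ q.length := SimpleGraph.dist_le q
    obtain ⟨q', hq'⟩ := (SimpleGraph.Walk.reachable q).exists_walk_length_eq_dist
    have h2 : H.dist v t ≤ q'.length + 1 := by
      have := SimpleGraph.dist_le (SimpleGraph.Walk.cons h q')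
      simpa [SimpleGraph.Walk.length_cons] using this
    rw [hq'] at h2
    simp only [SimpleGraph.Walk.length_cons] at hp
    omega

lemma not_mem_shortest {v t w : V} (hadj : H.Adj v w) (p : H.Walk w t)
    (hlen : p.length + 1 = H.dist v t) : v ∉ p.support := by
  intro hvin
  have hsplit := dist_split p hvin
  have hwv : 1 ≤ H.dist w v :=
    (hadj.symm.reachable).pos_dist_of_ne hadj.ne'
  have hp : H.dist w t ≤ p.length := SimpleGraph.dist_le p
  have hvt : H.dist v t ≤ H.dist w t + 1 := by
    obtain ⟨q', hq'⟩ := (SimpleGraph.Walk.reachable p).exists_walk_length_eq_dist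
    have := SimpleGraph.dist_le (SimpleGraph.Walk.cons hadj q')
    simpa [SimpleGraph.Walk.length_cons, hq'] using this
  omega

lemma unique_step (hac : H.IsAcyclic) {v t w₁ w₂ : V} (h1 : H.Adj v w₁)
    (hd1 : H.dist w₁ t + 1 = H.dist v t) (h2 : H.Adj v w₂)
    (hd2 : H.dist w₂ t + 1 = H.dist v t) : w₁ = w₂ := by
  have hvre : H.Reachable v t := SimpleGraph.Reachable.of_dist_ne_zero (by omega)
  have hw1re : H.Reachable w₁ t := (h1.symm.reachable).trans hvre
  have hw2re : H.Reachable w₂ t := (h2.symm.reachable).trans hvre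
  obtain ⟨p₁, hp₁path, hp₁len⟩ := shortest_path hw1re
  obtain ⟨p₂, hp₂path, hp₂len⟩ := shortest_path hw2re
  have hn1 : v ∉ p₁.support := not_mem_shortest h1 p₁ (by omega)
  have hn2 : v ∉ p₂.support := not_mem_shortest h2 p₂ (by omega)
  have heq := hac.path_unique ⟨SimpleGraph.Walk.cons h1 p₁, hp₁path.cons hn1⟩
    ⟨SimpleGraph.Walk.cons h2 p₂, hp₂path.cons hn2⟩
  have := congrArg (fun q : H.Path v t => (q : H.Walk v t).getVert 1) heq
  simpa [SimpleGraph.Walk.getVert_cons] using this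

lemma adj_dist_cases (hac : H.IsAcyclic) {a b t : V} (hadj : H.Adj a b)
    (hre : H.Reachable a t) :
    (H.dist b t + 1 = H.dist a t) ∨ (H.dist a t + 1 = H.dist b t) := by
  have hbre : H.Reachable b t := hadj.symm.reachable.trans hre
  obtain ⟨pa, hpa, hpalen⟩ := shortest_path hre
  obtain ⟨pb, hpb, hpblen⟩ := shortest_path hbre
  have h1 : H.dist a t ≤ H.dist b t + 1 := by
    have := SimpleGraph.dist_le (SimpleGraph.Walk.cons hadj pb)
    simpa [SimpleGraph.Walk.length_cons, hpblen] using this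
  have h2 : H.dist b t ≤ H.dist a t + 1 := by
    have := SimpleGraph.dist_le (SimpleGraph.Walk.cons hadj.symm pa)
    simpa [SimpleGraph.Walk.length_cons, hpalen] using this
  have hne : H.dist a t ≠ H.dist b t := by
    intro heq
    rcases Nat.eq_zero_or_pos (H.dist a t) with h0 | hpos
    · have ha : a = t := (hre.dist_eq_zero_iff).mp h0
      have hb : b = t := (hbre.dist_eq_zero_iff).mp (by omega)
      exact hadj.ne (ha.trans hb.symm)
    · have hnb : a ∉ pb.support := by
        intro hvin
        have hsplit := dist_split pb hvin
        have hba : 1 ≤ H.dist b a := (hadj.symm.reachable).pos_dist_of_ne hadj.ne'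
        omega
      have hpeq := hac.path_unique ⟨SimpleGraph.Walk.cons hadj pb, hpb.cons hnb⟩ ⟨pa, hpa⟩
      have := congrArg (fun q : H.Path a t => (q : H.Walk a t).length) hpeq
      simp only [SimpleGraph.Walk.length_cons] at this
      omega
  omega

open scoped Classical in
noncomputable def psi (H : SimpleGraph V) (r : H.ConnectedComponent → V) (v : V) : Option V :=
  if v = r (H.connectedComponentMk v) then none
  else if h : ∃ w, H.Adj v w ∧
      H.dist w (r (H.connectedComponentMk v)) + 1 = H.dist v (r (H.connectedComponentMk v))
    then some (Classical.choose h) else none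

lemma reachable_root {r : H.ConnectedComponent → V} (hr : ∀ c, r c ∈ c.supp) (v : V) :
    H.Reachable v (r (H.connectedComponentMk v)) := by
  have := (SimpleGraph.ConnectedComponent.mem_supp_iff _ _).mp (hr (H.connectedComponentMk v))
  exact (SimpleGraph.ConnectedComponent.exact this).symm

lemma psi_eq_none_iff {r : H.ConnectedComponent → V} (hr : ∀ c, r c ∈ c.supp) {v : V} :
    psi H r v = none ↔ v = r (H.connectedComponentMk v) := by
  constructor
  · intro h
    by_contra hne
    rw [psi, if_neg hne, dif_pos (exists_step (reachable_root hr v) hne)] at h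
    simp at h
  · intro h
    rw [psi, if_pos h]

lemma psi_some_spec {r : H.ConnectedComponent → V} {v w : V} (h : psi H r v = some w) :
    H.Adj v w ∧
      H.dist w (r (H.connectedComponentMk v)) + 1 = H.dist v (r (H.connectedComponentMk v)) := by
  rw [psi] at h
  split_ifs at h with h1 h2
  · obtain ⟨hadj, hd⟩ := Classical.choose_spec h2
    have : Classical.choose h2 = w := Option.some_injective _ h
    rw [← this]
    exact ⟨hadj, hd⟩

lemma psi_some_of_step (hac : H.IsAcyclic) {r : H.ConnectedComponent → V} {v w : V}
    (hne : v ≠ r (H.connectedComponentMk v)) (hadj : H.Adj v w)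
    (hd : H.dist w (r (H.connectedComponentMk v)) + 1
        = H.dist v (r (H.connectedComponentMk v))) :
    psi H r v = some w := by
  have hex : ∃ w', H.Adj v w' ∧
      H.dist w' (r (H.connectedComponentMk v)) + 1
        = H.dist v (r (H.connectedComponentMk v)) := ⟨w, hadj, hd⟩
  rw [psi, if_neg hne, dif_pos hex]
  obtain ⟨hadj', hd'⟩ := Classical.choose_spec hex
  exact congrArg some (unique_step hac hadj' hd' hadj hd)

lemma acyc_psi {r : H.ConnectedComponent → V} : Acyc (psi H r) := by
  have key : ∀ (k : ℕ) (v x : V), iter (psi H r) k v = some x →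
      H.connectedComponentMk x = H.connectedComponentMk v ∧
        H.dist x (r (H.connectedComponentMk v)) + k
          ≤ H.dist v (r (H.connectedComponentMk v)) := by
    intro k
    induction k with
    | zero =>
      intro v x h
      simp only [iter_zero, Option.some_inj] at h
      subst h
      exact ⟨rfl, le_rfl⟩
    | succ k ih =>
      intro v x h
      rw [iter_succ] at h
      cases hv : psi H r v with
      | none => rw [hv] at h; simp at h
      | some w =>
        rw [hv, Option.bind_some] at h
        obtain ⟨hadj, hd⟩ := psi_some_spec hv
        have hcomp : H.connectedComponentMk w = H.connectedComponentMk v :=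
          (SimpleGraph.ConnectedComponent.connectedComponentMk_eq_of_adj hadj).symm
        obtain ⟨h1, h2⟩ := ih w x h
        rw [hcomp] at h1 h2
        exact ⟨h1, by omega⟩
  intro v k hk
  obtain ⟨-, h2⟩ := key (k+1) v v hk
  omega

lemma graphOf_psi (hac : H.IsAcyclic) {r : H.ConnectedComponent → V}
    (hr : ∀ c, r c ∈ c.supp) : graphOf (psi H r) = H := by
  ext a b
  rw [graphOf_adj_iff]
  constructor
  · rintro ⟨hne, h1 | h1⟩
    · exact (psi_some_spec h1).1
    · exact (psi_some_spec h1).1.symm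
  · intro hadj
    have hcomp : H.connectedComponentMk b = H.connectedComponentMk a :=
      (SimpleGraph.ConnectedComponent.connectedComponentMk_eq_of_adj hadj).symm
    have hreach : H.Reachable a (r (H.connectedComponentMk a)) := reachable_root hr a
    refine ⟨hadj.ne, ?_⟩
    rcases adj_dist_cases hac hadj hreach with hcase | hcase
    · left
      apply psi_some_of_step hac ?_ hadj hcase
      intro heq
      have : H.dist a (r (H.connectedComponentMk a)) = 0 := by rw [← heq]; simp
      omega
    · right
      apply psi_some_of_step hac ?_ hadj.symm ?_
      · intro heq
        have : H.dist b (r (H.connectedComponentMk b)) = 0 := by rw [← heq]; simp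
        rw [hcomp] at this
        omega
      · rw [hcomp]
        exact hcase

end Psi

lemma mem_validF {f : V → Option V} :
    f ∈ validF G ↔ ∀ i w, f i = some w → G.Adj i w := by
  rw [validF, Fintype.mem_piFinset]
  constructor
  · intro h i w hiw
    have := h i
    rw [allowed, Finset.mem_insert, hiw] at this
    rcases this with h1 | h1
    · simp at h1
    · obtain ⟨u, hu, hu2⟩ := Finset.mem_image.mp h1
      rw [Option.some_inj] at hu2
      subst hu2
      exact (G.mem_neighborFinset i _).mp hu
  · intro h i
    rw [allowed, Finset.mem_insert]
    cases hi : f i with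
    | none => exact Or.inl rfl
    | some w =>
      right
      exact Finset.mem_image.mpr ⟨w, (G.mem_neighborFinset i w).mpr (h i w hi), rfl⟩

lemma graphOf_le {f : V → Option V} (h : ∀ i w, f i = some w → G.Adj i w) :
    graphOf f ≤ G := by
  intro a b hab
  rw [graphOf_adj_iff] at hab
  rcases hab.2 with h1 | h1
  · exact h a b h1
  · exact (h b a h1).symm

open scoped Classical in
noncomputable def rootOf' (f : V → Option V) (v : V) : V :=
  if hf : Acyc f then rootOf f hf v else v

open scoped Classical in
lemma rootOf'_eq {f : V → Option V} (hf : Acyc f) (v : V) : rootOf' f v = rootOf f hf v :=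
  dif_pos hf

open scoped Classical in
lemma card_fiber {H : SimpleGraph V} (hHG : H ≤ G) (hHac : H.IsAcyclic) :
    (((validF G).filter Acyc).filter fun f => graphOf f = H).card
      = ∏ c : H.ConnectedComponent, c.supp.ncard := by
  have hout : ∀ c : H.ConnectedComponent, H.connectedComponentMk c.out = c :=
    fun c => c.out_eq
  rw [show ∏ c : H.ConnectedComponent, c.supp.ncard
      = ∏ c : H.ConnectedComponent, c.supp.toFinset.card from
    Finset.prod_congr rfl fun c _ => Set.ncard_eq_toFinset_card' _]
  rw [← Fintype.card_piFinset]
  refine Finset.card_bij' (fun f _ => fun c : H.ConnectedComponent => rootOf' f c.out)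
    (fun r _ => psi H r) ?hi ?hj ?li ?ri
  case hi =>
    intro f hf
    simp only [Finset.mem_filter] at hf
    obtain ⟨⟨hval, hacyc⟩, hgr⟩ := hf
    rw [Fintype.mem_piFinset]
    intro c
    show rootOf' f c.out ∈ c.supp.toFinset
    rw [Set.mem_toFinset, SimpleGraph.ConnectedComponent.mem_supp_iff, rootOf'_eq hacyc]
    have hreach : (graphOf f).Reachable c.out (rootOf f hacyc c.out) :=
      reachable_rootOf f hacyc c.out
    rw [hgr] at hreach
    have : H.connectedComponentMk (rootOf f hacyc c.out) = H.connectedComponentMk c.out :=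
      SimpleGraph.ConnectedComponent.sound hreach.symm
    rw [this, hout]
  case hj =>
    intro r hr
    rw [Fintype.mem_piFinset] at hr
    have hr' : ∀ c, r c ∈ c.supp := fun c => Set.mem_toFinset.mp (hr c)
    have hgr : graphOf (psi H r) = H := graphOf_psi hHac hr'
    simp only [Finset.mem_filter]
    refine ⟨⟨?_, acyc_psi⟩, hgr⟩
    rw [mem_validF]
    intro i w hiw
    exact hHG (psi_some_spec hiw).1
  case li =>
    intro f hf
    simp only [Finset.mem_filter] at hf
    obtain ⟨⟨hval, hacyc⟩, hgr⟩ := hf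
    show psi H (fun c : H.ConnectedComponent => rootOf' f c.out) = f
    have hrw : (fun c : H.ConnectedComponent => rootOf' f c.out)
        = fun c : H.ConnectedComponent => rootOf f hacyc c.out :=
      funext fun c => rootOf'_eq hacyc _
    rw [hrw]
    have hsupp : ∀ c : H.ConnectedComponent,
        (fun c : H.ConnectedComponent => rootOf f hacyc c.out) c ∈ c.supp := by
      intro c
      rw [SimpleGraph.ConnectedComponent.mem_supp_iff]
      have hreach : (graphOf f).Reachable c.out (rootOf f hacyc c.out) :=
        reachable_rootOf f hacyc c.out
      rw [hgr] at hreach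
      have : H.connectedComponentMk (rootOf f hacyc c.out) = H.connectedComponentMk c.out :=
        SimpleGraph.ConnectedComponent.sound hreach.symm
      rw [this, hout]
    funext v
    have hrootv : rootOf f hacyc (H.connectedComponentMk v).out = rootOf f hacyc v := by
      apply rootOf_eq_of_reachable
      rw [hgr]
      exact SimpleGraph.ConnectedComponent.exact (hout _)
    cases hv : f v with
    | none =>
      have hcond : v = rootOf f hacyc (H.connectedComponentMk v).out := by
        rw [hrootv, rootOf_eq_self f hacyc hv]
      rw [(psi_eq_none_iff hsupp).mpr hcond]
    | some w =>
      have hne : v ≠ rootOf f hacyc v := by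
        intro heq
        have h2 := f_rootOf f hacyc v
        rw [← heq, hv] at h2
        simp at h2
      have hadj : H.Adj v w := by
        rw [← hgr]
        exact adj_graphOf hacyc hv
      have hroot_vw : rootOf f hacyc v = rootOf f hacyc w := rootOf_step f hacyc hv
      have hdists : H.dist w (rootOf f hacyc v) + 1 = H.dist v (rootOf f hacyc v) := by
        rw [← hgr, dist_rootOf f hacyc v, hroot_vw, dist_rootOf f hacyc w,
          ← depth_succ f hacyc hv]
      apply psi_some_of_step hHac ?hne hadj ?hd
      case hne =>
        show v ≠ rootOf f hacyc (H.connectedComponentMk v).out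
        rw [hrootv]; exact hne
      case hd =>
        show H.dist w (rootOf f hacyc (H.connectedComponentMk v).out) + 1
            = H.dist v (rootOf f hacyc (H.connectedComponentMk v).out)
        rw [hrootv]; exact hdists
  case ri =>
    intro r hr
    rw [Fintype.mem_piFinset] at hr
    have hr' : ∀ c, r c ∈ c.supp := fun c => Set.mem_toFinset.mp (hr c)
    have hgr : graphOf (psi H r) = H := graphOf_psi hHac hr'
    have hacyc : Acyc (psi H r) := acyc_psi
    show (fun c : H.ConnectedComponent => rootOf' (psi H r) c.out) = r
    funext c
    show rootOf' (psi H r) c.out = r c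
    rw [rootOf'_eq hacyc]
    have hxnone : psi H r (rootOf (psi H r) hacyc c.out) = none := f_rootOf _ hacyc c.out
    have hxeq := (psi_eq_none_iff hr').mp hxnone
    have hcomp : H.connectedComponentMk (rootOf (psi H r) hacyc c.out) = c := by
      have hreach : (graphOf (psi H r)).Reachable c.out (rootOf (psi H r) hacyc c.out) :=
        reachable_rootOf _ hacyc c.out
      rw [hgr] at hreach
      rw [SimpleGraph.ConnectedComponent.sound hreach.symm, hout]
    rw [hxeq, hcomp]

open scoped Classical in
lemma partB : ((validF G).filter Acyc).card
    = ∑ H ∈ Finset.univ.filter (fun H : SimpleGraph V => H ≤ G ∧ H.IsAcyclic),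
        ∏ c : H.ConnectedComponent, c.supp.ncard := by
  have hmem : ∀ f ∈ (validF G).filter Acyc, graphOf f ∈
      Finset.univ.filter (fun H : SimpleGraph V => H ≤ G ∧ H.IsAcyclic) := by
    intro f hf
    simp only [Finset.mem_filter] at hf ⊢
    exact ⟨Finset.mem_univ _, graphOf_le G ((mem_validF G).mp hf.1), graphOf_isAcyclic hf.2⟩
  rw [Finset.card_eq_sum_card_fiberwise hmem]
  apply Finset.sum_congr rfl
  intro H hH
  simp only [Finset.mem_filter, Finset.mem_univ, true_and] at hH
  exact card_fiber G hH.1 hH.2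

end CSF

open scoped Classical in
theorem chebotarev_shamis_forest_aux {V : Type*} [Fintype V] [DecidableEq V] (G : SimpleGraph V)
    [DecidableRel G.Adj] :
    (1 + G.lapMatrix ℝ).det =
      ∑ H ∈ Finset.univ.filter (fun H : SimpleGraph V => H ≤ G ∧ H.IsAcyclic),
        ∏ c : H.ConnectedComponent, (c.supp.ncard : ℝ) := by
  rw [CSF.partA G, CSF.partB G]
  push_cast
  rfl

open scoped Classical in
/-- Chebotarev–Shamis forest theorem: for a finite simple graph `G` on a vertex set `V` with
Laplacian matrix `L` over `ℝ`, `det(I + L) = Σ_H Π_c |c|`, where `H` runs over all acyclic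
simple graphs on `V` with `H ≤ G`, `c` runs over the connected components of `H`, and `|c|`
is the number of vertices of the component `c`. Equivalently, `det(I + L)` is the number of
rooted spanning forests of `G`. -/
theorem chebotarev_shamis_forest {V : Type*} [Fintype V] [DecidableEq V] (G : SimpleGraph V)
    [DecidableRel G.Adj] :
    (1 + G.lapMatrix ℝ).det =
      ∑ H ∈ Finset.univ.filter (fun H : SimpleGraph V => H ≤ G ∧ H.IsAcyclic),
        ∏ c : H.ConnectedComponent, (c.supp.ncard : ℝ) := by
  exact chebotarev_shamis_forest_aux G
end

section
/- Appending linear combinations of rows (row-reduction lemma): Let F and G be real n×m matrices and let λ, μ ∈ ℝ^m. Let A be the n×(m+1) matrix obtained from F by appending the column F·λ (the linear combination of the columns of F with coefficients λ), and let B be obtained from G by appending the column G·μ. Then (−1)^m times the coefficient of x^1 in the characteristic polynomial det(x·I − AᵀB) of the (m+1)×(m+1) matrix AᵀB equals (1 + λ·μ)·det(FᵀG), where λ·μ = Σ_{j=1}^m λ_j μ_j. In particular, appending λ times the l-th row of Fᵀ to Fᵀ and μ times the l-th row of Gᵀ to Gᵀ multiplies the pseudo-determinant Det(FᵀG) by the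 factor 1 + λμ. -/
open Matrix Polynomial

lemma eval_charpoly'_s18 {k : ℕ} (M : Matrix (Fin k) (Fin k) ℝ) (x : ℝ) :
    M.charpoly.eval x = (x • (1 : Matrix (Fin k) (Fin k) ℝ) - M).det := by
  rw [Matrix.charpoly, _root_.eval_det, matPolyEquiv_charmatrix]
  simp [Matrix.scalar, Algebra.algebraMap_eq_smul_one]

lemma charpoly_rect_comm {k : ℕ} (P : Matrix (Fin (k+1)) (Fin k) ℝ)
    (Q : Matrix (Fin k) (Fin (k+1)) ℝ) :
    (P * Q).charpoly = X * (Q * P).charpoly := by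
  have key : ∀ x : ℝ, x ≠ 0 →
      (P * Q).charpoly.eval x = (X * (Q * P).charpoly).eval x := by
    intro x hx
    have h1 : x • (1 : Matrix (Fin (k+1)) (Fin (k+1)) ℝ) - P * Q
        = x • ((1 : Matrix (Fin (k+1)) (Fin (k+1)) ℝ) - x⁻¹ • (P * Q)) := by
      rw [smul_sub, smul_smul, mul_inv_cancel₀ hx, one_smul]
    have h2 : x • (1 : Matrix (Fin k) (Fin k) ℝ) - Q * P
        = x • ((1 : Matrix (Fin k) (Fin k) ℝ) - x⁻¹ • (Q * P)) := by
      rw [smul_sub, smul_smul, mul_inv_cancel₀ hx, one_smul]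
    have h3 : (1 : Matrix (Fin (k+1)) (Fin (k+1)) ℝ) - x⁻¹ • (P * Q)
        = 1 - P * (x⁻¹ • Q) := by rw [Matrix.mul_smul]
    have h4 : (1 : Matrix (Fin k) (Fin k) ℝ) - x⁻¹ • (Q * P)
        = 1 - (x⁻¹ • Q) * P := by rw [Matrix.smul_mul]
    rw [eval_mul, eval_X, eval_charpoly'_s18, eval_charpoly'_s18, h1, h2, Matrix.det_smul,
      Matrix.det_smul, h3, h4, Matrix.det_one_sub_mul_comm]
    simp [Fintype.card_fin, pow_succ]
    ring
  have : (P * Q).charpoly - X * (Q * P).charpoly = 0 := by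
    apply Polynomial.eq_zero_of_infinite_isRoot
    apply Set.Infinite.mono (s := {x : ℝ | x ≠ 0})
    · intro x hx
      simp only [Set.mem_setOf_eq, IsRoot.def, eval_sub, key x hx, sub_self]
    · exact (Set.finite_singleton (0:ℝ)).infinite_compl
  exact sub_eq_zero.mp this


/-- Appending linear combinations of rows (row-reduction lemma): let `F, G` be real `n × m`
matrices and `lam, mu ∈ ℝ^m`. Let `A` be the `n × (m+1)` matrix obtained from `F` by appending
the column `F·lam` (the linear combination of the columns of `F` with coefficients `lam`), and
let `B` be obtained from `G` by appending the column `G·mu`. Then `(-1)^m` times the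
coefficient of `x^1` in the characteristic polynomial `det(x·I − AᵀB)` of the
`(m+1) × (m+1)` matrix `AᵀB` equals `(1 + lam·mu) · det(Fᵀ G)`. -/
theorem append_row_combination_pdet {n m : ℕ} (F G : Matrix (Fin n) (Fin m) ℝ)
    (lam mu : Fin m → ℝ)
    (A : Matrix (Fin n) (Fin (m + 1)) ℝ) (hA : ∀ i, A i = Fin.snoc (F i) (F.mulVec lam i))
    (B : Matrix (Fin n) (Fin (m + 1)) ℝ) (hB : ∀ i, B i = Fin.snoc (G i) (G.mulVec mu i)) :
    (-1 : ℝ) ^ m * (Aᵀ * B).charpoly.coeff 1 = (1 + lam ⬝ᵥ mu) * (Fᵀ * G).det := by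
  classical
  set C : Matrix (Fin m) (Fin (m+1)) ℝ :=
    Matrix.of fun k => Fin.snoc ((1 : Matrix (Fin m) (Fin m) ℝ) k) (lam k) with hC
  set D : Matrix (Fin m) (Fin (m+1)) ℝ :=
    Matrix.of fun k => Fin.snoc ((1 : Matrix (Fin m) (Fin m) ℝ) k) (mu k) with hD
  have hAC : A = F * C := by
    ext i j
    rw [hA]
    refine Fin.lastCases ?_ ?_ j
    · simp [Matrix.mul_apply, hC, Matrix.mulVec, dotProduct]
    · intro j'
      simp [Matrix.mul_apply, hC, Matrix.one_apply, mul_ite, Finset.sum_ite_eq']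
  have hBD : B = G * D := by
    ext i j
    rw [hB]
    refine Fin.lastCases ?_ ?_ j
    · simp [Matrix.mul_apply, hD, Matrix.mulVec, dotProduct]
    · intro j'
      simp [Matrix.mul_apply, hD, Matrix.one_apply, mul_ite, Finset.sum_ite_eq']
  have hfact : Aᵀ * B = (Cᵀ * (Fᵀ * G)) * D := by
    rw [hAC, hBD, Matrix.transpose_mul]
    simp [Matrix.mul_assoc]
  have key := charpoly_rect_comm (Cᵀ * (Fᵀ * G)) D
  rw [hfact, key, Polynomial.coeff_X_mul]
  have h0 : (D * (Cᵀ * (Fᵀ * G))).charpoly.coeff 0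
      = (-1:ℝ)^m * (D * (Cᵀ * (Fᵀ * G))).det := by
    have h := Matrix.det_eq_sign_charpoly_coeff (D * (Cᵀ * (Fᵀ * G)))
    rw [Fintype.card_fin] at h
    rw [h, ← mul_assoc, ← pow_add, Even.neg_one_pow ⟨m, (two_mul m).symm ▸ rfl⟩, one_mul]
  rw [h0, ← mul_assoc, ← pow_add, Even.neg_one_pow ⟨m, (two_mul m).symm ▸ rfl⟩, one_mul]
  have hDC : D * Cᵀ = 1 + Matrix.replicateCol Unit mu * Matrix.replicateRow Unit lam := by
    ext k l
    simp [Matrix.mul_apply, hC, hD, Fin.sum_univ_castSucc, Matrix.one_apply,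
      mul_ite, ite_mul, Finset.sum_ite_eq']
  rw [← Matrix.mul_assoc, hDC, Matrix.det_mul, Matrix.det_one_add_replicateCol_mul_replicateRow]
end
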